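/- For k even, k ≥ 2, the number of paths of length k starting and ending at the same level, with maximum level 0, consisting of up-steps (+1), down-steps (−1) and exactly two flat steps both occurring at the same level, equals k·2^{k−3}. -/

import Mathlib

/-- The step `u` of the path `γ` is a flat step. -/
def IsFlatStep {k : ℕ} (γ : Fin (k + 1) → ℤ) (u : Fin k) : Prop :=
  γ u.succ = γ u.castSucc

/-- `γ` is a closed path of length `k` with steps in {-1,0,1}, maximum level `0`,
having exactly two flat steps, both at the same level, all other steps of size ±1. -/
def IsGammaTwoFlat (k : ℕ) (γ : Fin (k + 1) → ℤ) : Prop :=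
  γ 0 = γ (Fin.last k) ∧
  (∀ u : Fin k, |γ u.succ - γ u.castSucc| ≤ 1) ∧
  (∀ u, γ u ≤ 0) ∧ (∃ u, γ u = 0) ∧
  ∃ u v : Fin k, u ≠ v ∧ IsFlatStep γ u ∧ IsFlatStep γ v ∧
    γ u.castSucc = γ v.castSucc ∧
    ∀ w : Fin k, IsFlatStep γ w → w = u ∨ w = v

open Finset

namespace Stmt5X

def c : ℕ → ℕ := Nat.centralBinom
def Sc (m : ℕ) : ℕ := ∑ e ∈ range (m+1), c e * c (m - e)
def Tc (m : ℕ) : ℕ := ∑ e ∈ range (m+1), (2*e+1) * (c e * c (m - e))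
def Uc (m : ℕ) : ℕ := ∑ e ∈ range (m+1), e * (c e * c (m - e))

lemma two_Tc (m : ℕ) : 2 * Tc m = (2*m+2) * Sc m := by
  have h := Finset.sum_range_reflect (fun e => (2*e+1) * (c e * c (m - e))) (m+1)
  have : 2 * Tc m = Tc m + Tc m := by ring
  rw [this]
  nth_rewrite 2 [Tc]
  rw [← h, Tc, Sc, ← Finset.sum_add_distrib, Finset.mul_sum]
  refine Finset.sum_congr rfl fun e he => ?_
  rw [Finset.mem_range] at he
  have h1 : m + 1 - 1 - e = m - e := by omega
  rw [h1]
  have h2 : m - (m - e) = e := by omega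
  rw [h2]
  rw [mul_comm (c (m-e)) (c e), ← add_mul]
  have h3 : 2*e+1 + (2*(m-e)+1) = 2*m+2 := by omega
  rw [h3]

lemma two_Uc (m : ℕ) : 2 * Uc m = m * Sc m := by
  have h := Finset.sum_range_reflect (fun e => e * (c e * c (m - e))) (m+1)
  have : 2 * Uc m = Uc m + Uc m := by ring
  rw [this]
  nth_rewrite 2 [Uc]
  rw [← h, Uc, Sc, ← Finset.sum_add_distrib, Finset.mul_sum]
  refine Finset.sum_congr rfl fun e he => ?_
  rw [Finset.mem_range] at he
  have h1 : m + 1 - 1 - e = m - e := by omega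
  rw [h1]
  have h2 : m - (m - e) = e := by omega
  rw [h2]
  rw [mul_comm (c (m-e)) (c e), ← add_mul]
  have h3 : e + (m - e) = m := by omega
  rw [h3]

lemma two_Tc_eq_Uc_succ (m : ℕ) : 2 * Tc m = Uc (m+1) := by
  rw [Uc, Finset.sum_range_succ' (fun e => e * (c e * c (m + 1 - e))) (m+1)]
  simp only [Nat.zero_eq, zero_mul, add_zero]
  rw [Tc, Finset.mul_sum]
  refine Finset.sum_congr rfl fun e he => ?_
  have h1 : m + 1 - (e + 1) = m - e := by omega
  rw [h1]
  have key : (e + 1) * c (e + 1) = 2 * (2 * e + 1) * c e := Nat.succ_mul_centralBinom_succ e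
  calc 2 * ((2*e+1) * (c e * c (m - e))) = (2 * (2*e+1) * c e) * c (m-e) := by ring
    _ = ((e+1) * c (e+1)) * c (m-e) := by rw [key]
    _ = (e+1) * (c (e+1) * c (m-e)) := by ring

lemma Sc_succ (m : ℕ) : Sc (m+1) = 4 * Sc m := by
  have h1 : 2 * (2 * Tc m) = 2 * Uc (m+1) := by rw [two_Tc_eq_Uc_succ]
  rw [two_Uc, two_Tc] at h1
  have : (m+1) * Sc (m+1) = (m+1) * (4 * Sc m) := by ring_nf; ring_nf at h1; omega
  exact Nat.eq_of_mul_eq_mul_left (by omega) this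

lemma Sc_eq (m : ℕ) : Sc m = 4 ^ m := by
  induction m with
  | zero => simp [Sc, c, Nat.centralBinom]
  | succ n ih => rw [Sc_succ, ih]; ring

lemma Tc_eq (m : ℕ) : Tc m = (m+1) * 4 ^ m := by
  have h := two_Tc m
  rw [Sc_eq] at h
  have h2 : 2*((m+1) * 4^m) = (2*m+2) * 4^m := by ring
  omega

/-- the weighted sum we need -/
lemma weighted_sum (m : ℕ) :
    ∑ e ∈ range (m+1), (2*m+1-2*e) * (c e * c (m - e)) = (m+1) * 4 ^ m := by
  rw [← Tc_eq]
  have h := Finset.sum_range_reflect (fun e => (2*e+1) * (c e * c (m - e))) (m+1)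
  rw [Tc, ← h]
  refine Finset.sum_congr rfl fun e he => ?_
  rw [Finset.mem_range] at he
  have h1 : m + 1 - 1 - e = m - e := by omega
  have h2 : m - (m - e) = e := by omega
  rw [h1, h2]
  have h3 : 2*(m-e)+1 = 2*m+1-2*e := by omega
  rw [h3]
  ring

variable {k : ℕ}

def pref (s : Fin k → ℤ) (j : ℕ) : ℤ := ∑ i : Fin k, if (i:ℕ) < j then s i else 0

lemma pref_zero (s : Fin k → ℤ) : pref s 0 = 0 := by simp [pref]

lemma pref_step (s : Fin k → ℤ) (u : Fin k) : pref s ((u:ℕ)+1) = pref s (u:ℕ) + s u := by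
  have h : ∀ i : Fin k, (if (i:ℕ) < (u:ℕ)+1 then s i else 0)
      = (if (i:ℕ) < (u:ℕ) then s i else 0) + (if i = u then s i else 0) := by
    intro i
    by_cases hi : i = u
    · subst hi; simp
    · have hne : (i:ℕ) ≠ (u:ℕ) := fun h => hi (Fin.ext h)
      by_cases hlt : (i:ℕ) < (u:ℕ)
      · simp [hlt, hi, Nat.lt_succ_of_lt hlt]
      · have : ¬ (i:ℕ) < (u:ℕ)+1 := by omega
        simp [hlt, hi, this]
  rw [pref, pref]
  calc (∑ i : Fin k, if (i:ℕ) < (u:ℕ)+1 then s i else 0)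
      = ∑ i : Fin k, ((if (i:ℕ) < (u:ℕ) then s i else 0) + (if i = u then s i else 0)) :=
        Finset.sum_congr rfl fun i _ => h i
    _ = (∑ i : Fin k, if (i:ℕ) < (u:ℕ) then s i else 0) + ∑ i : Fin k, if i = u then s i else 0 :=
        Finset.sum_add_distrib
    _ = (∑ i : Fin k, if (i:ℕ) < (u:ℕ) then s i else 0) + s u := by
        rw [Finset.sum_ite_eq' Finset.univ u s]; simp

lemma pref_last (s : Fin k → ℤ) : pref s k = ∑ i, s i := by
  refine Finset.sum_congr rfl fun i _ => ?_
  simp [i.isLt]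

/-- the sum of s over indices strictly between u and v -/
def midsum (s : Fin k → ℤ) (u v : Fin k) : ℤ :=
  ∑ i : Fin k, if (u:ℕ) < (i:ℕ) ∧ (i:ℕ) < (v:ℕ) then s i else 0

lemma pref_diff (s : Fin k → ℤ) (u v : Fin k) (huv : u < v) (hu : s u = 0) :
    pref s (v:ℕ) - pref s (u:ℕ) = midsum s u v := by
  have hlt : (u:ℕ) < (v:ℕ) := huv
  have h : ∀ i : Fin k, (if (i:ℕ) < (v:ℕ) then s i else 0) - (if (i:ℕ) < (u:ℕ) then s i else 0)
      = (if (u:ℕ) < (i:ℕ) ∧ (i:ℕ) < (v:ℕ) then s i else 0) + (if i = u then s i else 0) := by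
    intro i
    by_cases hi : i = u
    · subst hi
      rw [if_pos rfl, hu]
      split_ifs <;> omega
    · have hne : (i:ℕ) ≠ (u:ℕ) := fun h => hi (Fin.ext h)
      rw [if_neg hi, add_zero]
      split_ifs <;> omega
  rw [pref, pref, ← Finset.sum_sub_distrib]
  rw [Finset.sum_congr rfl fun i _ => h i, Finset.sum_add_distrib,
    Finset.sum_ite_eq' Finset.univ u s, midsum]
  simp [hu]

def Mx (s : Fin k → ℤ) : ℤ :=
  Finset.univ.sup' (⟨(0 : Fin (k+1)), Finset.mem_univ 0⟩) (fun j : Fin (k+1) => pref s (j:ℕ))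

def decode (s : Fin k → ℤ) : Fin (k+1) → ℤ := fun j => pref s (j:ℕ) - Mx s

lemma decode_step (s : Fin k → ℤ) (u : Fin k) :
    decode s u.succ - decode s u.castSucc = s u := by
  simp only [decode, Fin.val_succ, Fin.coe_castSucc]
  rw [pref_step]
  ring

def Cond (s : Fin k → ℤ) : Prop :=
  (∀ i, s i = -1 ∨ s i = 0 ∨ s i = 1) ∧ (∑ i, s i) = 0 ∧
  ∃ u v : Fin k, u < v ∧ s u = 0 ∧ s v = 0 ∧ (∀ w, s w = 0 → w = u ∨ w = v) ∧
    midsum s u v = 0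

instance : DecidablePred (Cond (k := k)) := fun s => by
  unfold Cond; infer_instance

def D (k : ℕ) : Finset (Fin k → ℤ) :=
  ((Finset.univ : Finset (Fin k → Fin 3)).image (fun f i => (f i : ℤ) - 1)).filter Cond

lemma mem_D {s : Fin k → ℤ} : s ∈ D k ↔ Cond s := by
  constructor
  · exact fun h => (Finset.mem_filter.1 h).2
  · intro h
    refine Finset.mem_filter.2 ⟨?_, h⟩
    refine Finset.mem_image.2 ⟨fun i => ⟨(s i + 1).toNat, ?_⟩, Finset.mem_univ _, ?_⟩
    · rcases h.1 i with h1 | h1 | h1 <;> simp [h1]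
    · funext i
      rcases h.1 i with h1 | h1 | h1 <;> simp [h1]


lemma flat_iff (s : Fin k → ℤ) (w : Fin k) : IsFlatStep (decode s) w ↔ s w = 0 := by
  rw [IsFlatStep, ← sub_eq_zero, decode_step]

lemma decode_mem (s : Fin k → ℤ) (hs : Cond s) : IsGammaTwoFlat k (decode s) := by
  obtain ⟨hval, hsum, u, v, huv, hu, hv, hex, hmid⟩ := hs
  have hle : ∀ j : Fin (k+1), decode s j ≤ 0 := by
    intro j
    simp only [decode, sub_nonpos]
    exact Finset.le_sup' (fun j : Fin (k+1) => pref s (j:ℕ)) (Finset.mem_univ j)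
  refine ⟨?_, ?_, hle, ?_, u, v, huv.ne, (flat_iff s u).2 hu, (flat_iff s v).2 hv, ?_, ?_⟩
  · simp only [decode]
    rw [show ((0 : Fin (k+1)) : ℕ) = 0 from rfl, show ((Fin.last k) : ℕ) = k from rfl,
      pref_zero, pref_last, hsum]
  · intro w
    rw [show decode s w.succ - decode s w.castSucc = s w from decode_step s w]
    rcases hval w with h | h | h <;> simp [h]
  · obtain ⟨j, _, hj⟩ := Finset.exists_mem_eq_sup'
      (⟨(0 : Fin (k+1)), Finset.mem_univ 0⟩) (fun j : Fin (k+1) => pref s (j:ℕ))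
    refine ⟨j, ?_⟩
    show pref s (j:ℕ) - Mx s = 0
    rw [Mx, hj]
    ring
  · have h := pref_diff s u v huv hu
    rw [hmid] at h
    simp only [decode, Fin.coe_castSucc]
    have : pref s (v:ℕ) = pref s (u:ℕ) := by linarith
    rw [this]
  · intro w hw
    exact hex w ((flat_iff s w).1 hw)

lemma exists_decode (γ : Fin (k+1) → ℤ) (hγ : IsGammaTwoFlat k γ) :
    ∃ s ∈ D k, decode s = γ := by
  obtain ⟨hclosed, hstep, hle, ⟨j0, hj0⟩, u, v, huv, hfu, hfv, hlev, hex⟩ := hγ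
  set st : Fin k → ℤ := fun w => γ w.succ - γ w.castSucc with hst
  have hpref : ∀ (jn : ℕ) (h : jn ≤ k), pref st jn = γ ⟨jn, by omega⟩ - γ 0 := by
    intro jn
    induction jn with
    | zero =>
      intro h
      rw [pref_zero]
      rw [show γ ⟨0, by omega⟩ = γ 0 from rfl]
      ring
    | succ n ih =>
      intro h
      have hn : n < k := h
      have h2 := pref_step st ⟨n, hn⟩
      rw [show ((⟨n, hn⟩ : Fin k) : ℕ) = n from rfl] at h2
      rw [h2, ih (by omega)]
      rw [show st ⟨n, hn⟩ = γ ⟨n+1, by omega⟩ - γ ⟨n, by omega⟩ from rfl]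
      ring
  have hprefj : ∀ j : Fin (k+1), pref st (j:ℕ) = γ j - γ 0 := by
    intro j
    have h := hpref (j:ℕ) (by omega)
    rwa [show (⟨(j:ℕ), by omega⟩ : Fin (k+1)) = j from Fin.ext rfl] at h
  have hMx : Mx st = - γ 0 := by
    apply le_antisymm
    · apply Finset.sup'_le
      intro j _
      rw [hprefj]
      have := hle j
      linarith
    · have h := Finset.le_sup' (fun j : Fin (k+1) => pref st (j:ℕ)) (Finset.mem_univ j0)
      rw [hprefj j0, hj0] at h
      calc -γ 0 = 0 - γ 0 := by ring
        _ ≤ _ := h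
  have hdec : decode st = γ := by
    funext j
    rw [decode, hprefj, hMx]
    ring
  have hflat : ∀ w : Fin k, st w = 0 ↔ IsFlatStep γ w := by
    intro w
    rw [show st w = γ w.succ - γ w.castSucc from rfl, sub_eq_zero, IsFlatStep]
  refine ⟨st, mem_D.2 ⟨?_, ?_, ?_⟩, hdec⟩
  · intro i
    have h := hstep i
    rw [show st i = γ i.succ - γ i.castSucc from rfl]
    rcases abs_le.1 h with ⟨h1, h2⟩
    omega
  · rw [← pref_last, hpref k le_rfl, show (⟨k, by omega⟩ : Fin (k+1)) = Fin.last k from rfl,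
      ← hclosed]
    ring
  · have mids : ∀ (a b : Fin k), a < b → st a = 0 → γ a.castSucc = γ b.castSucc →
        midsum st a b = 0 := by
      intro a b hab ha0 heq
      have h := pref_diff st a b hab ha0
      have hb : pref st (b:ℕ) = γ b.castSucc - γ 0 := by
        have h2 := hprefj b.castSucc
        rwa [Fin.coe_castSucc] at h2
      have ha : pref st (a:ℕ) = γ a.castSucc - γ 0 := by
        have h2 := hprefj a.castSucc
        rwa [Fin.coe_castSucc] at h2
      rw [hb, ha, heq] at h
      linarith
    rcases huv.lt_or_gt with h | h
    · exact ⟨u, v, h, (hflat u).2 hfu, (hflat v).2 hfv,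
        fun w hw => hex w ((hflat w).1 hw), mids u v h ((hflat u).2 hfu) hlev⟩
    · refine ⟨v, u, h, (hflat v).2 hfv, (hflat u).2 hfu,
        fun w hw => (hex w ((hflat w).1 hw)).symm, mids v u h ((hflat v).2 hfv) hlev.symm⟩

lemma decode_inj : Function.Injective (decode (k := k)) := by
  intro s t h
  funext u
  rw [← decode_step s u, ← decode_step t u, h]

lemma ncard_eq : {γ : Fin (k+1) → ℤ | IsGammaTwoFlat k γ}.ncard = (D k).card := by
  have hset : {γ : Fin (k+1) → ℤ | IsGammaTwoFlat k γ} = ↑((D k).image decode) := by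
    ext γ
    simp only [Set.mem_setOf_eq, Finset.coe_image, Set.mem_image, Finset.mem_coe]
    constructor
    · intro h
      obtain ⟨s, hs, hd⟩ := exists_decode γ h
      exact ⟨s, hs, hd⟩
    · rintro ⟨s, hs, rfl⟩
      exact decode_mem s (mem_D.1 hs)
  rw [hset, Set.ncard_coe_finset, Finset.card_image_of_injective _ decode_inj]


def zex (p : Fin k × Fin k) (s : Fin k → ℤ) : Prop :=
  s p.1 = 0 ∧ s p.2 = 0 ∧ ∀ w, s w = 0 → w = p.1 ∨ w = p.2

instance (p : Fin k × Fin k) : DecidablePred (zex p) := fun s => by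
  unfold zex; infer_instance

def Ipairs (k : ℕ) : Finset (Fin k × Fin k) := univ.filter (fun p => p.1 < p.2)

lemma D_card_sum : (D k).card = ∑ p ∈ Ipairs k, ((D k).filter (zex p)).card := by
  have hbi : D k = (Ipairs k).biUnion (fun p => (D k).filter (zex p)) := by
    ext s
    simp only [Finset.mem_biUnion, Finset.mem_filter, Ipairs, Finset.mem_univ, true_and]
    constructor
    · intro hs
      obtain ⟨hval, hsum, u, v, huv, hu, hv, hex, hmid⟩ := mem_D.1 hs
      exact ⟨(u, v), huv, hs, hu, hv, hex⟩
    · rintro ⟨p, _, hs, _⟩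
      exact hs
  conv_lhs => rw [hbi]
  refine Finset.card_biUnion ?_
  intro p hp q hq hpq
  rw [Function.onFun_apply, Finset.disjoint_left]
  intro s hsp hsq
  apply hpq
  obtain ⟨p1, p2⟩ := p
  obtain ⟨q1, q2⟩ := q
  obtain ⟨-, hp1, hp2, hpe⟩ := Finset.mem_filter.1 hsp
  obtain ⟨-, hq1, hq2, hqe⟩ := Finset.mem_filter.1 hsq
  rw [Finset.mem_coe, Ipairs, Finset.mem_filter] at hp hq
  have hop : p1 < p2 := hp.2
  have hoq : q1 < q2 := hq.2
  have e1 : q1 = p1 ∨ q1 = p2 := hpe q1 hq1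
  have e2 : q2 = p1 ∨ q2 = p2 := hpe q2 hq2
  rw [Prod.mk.injEq]
  rcases e1 with e1 | e1 <;> rcases e2 with e2 | e2
  · subst e1; subst e2; exact absurd hoq (lt_irrefl _)
  · exact ⟨e1.symm, e2.symm⟩
  · subst e1; subst e2; exact absurd (hop.trans hoq) (lt_irrefl _)
  · subst e1; subst e2; exact absurd hoq (lt_irrefl _)

/-- middle index set -/
def Mid (u v : Fin k) : Finset (Fin k) :=
  univ.filter (fun i : Fin k => (u:ℕ) < (i:ℕ) ∧ (i:ℕ) < (v:ℕ))

/-- outer index set -/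
def Out (u v : Fin k) : Finset (Fin k) :=
  univ.filter (fun i : Fin k => ¬((u:ℕ) < (i:ℕ) ∧ (i:ℕ) < (v:ℕ)) ∧ i ≠ u ∧ i ≠ v)

lemma card_Mid (u v : Fin k) : (Mid u v).card = (v:ℕ) - (u:ℕ) - 1 := by
  have : Mid u v = Finset.Ioo u v := by
    ext i
    rw [Mid, Finset.mem_filter, Finset.mem_Ioo]
    simp only [Finset.mem_univ, true_and]
    exact ⟨fun h => ⟨h.1, h.2⟩, fun h => ⟨h.1, h.2⟩⟩
  rw [this, Fin.card_Ioo]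

lemma u_notMem_Mid (u v : Fin k) : u ∉ Mid u v := by
  rw [Mid, Finset.mem_filter]
  rintro ⟨-, h⟩
  omega
lemma v_notMem_Mid (u v : Fin k) : v ∉ Mid u v := by
  rw [Mid, Finset.mem_filter]
  rintro ⟨-, h⟩
  omega
lemma u_notMem_Out (u v : Fin k) : u ∉ Out u v := by
  rw [Out, Finset.mem_filter]
  rintro ⟨-, -, h, -⟩
  exact h rfl
lemma v_notMem_Out (u v : Fin k) : v ∉ Out u v := by
  rw [Out, Finset.mem_filter]
  rintro ⟨-, -, -, h⟩
  exact h rfl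

lemma mid_disj_out (u v : Fin k) : ∀ i ∈ Mid u v, i ∉ Out u v := by
  intro i hi
  rw [Mid, Finset.mem_filter] at hi
  rw [Out, Finset.mem_filter]
  rintro ⟨-, h, -⟩
  exact h hi.2

lemma mem_cases (u v : Fin k) (i : Fin k) :
    i = u ∨ i = v ∨ i ∈ Mid u v ∨ i ∈ Out u v := by
  by_cases h1 : i = u
  · exact Or.inl h1
  by_cases h2 : i = v
  · exact Or.inr (Or.inl h2)
  by_cases h3 : (u:ℕ) < (i:ℕ) ∧ (i:ℕ) < (v:ℕ)
  · exact Or.inr (Or.inr (Or.inl (Finset.mem_filter.2 ⟨Finset.mem_univ _, h3⟩)))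
  · exact Or.inr (Or.inr (Or.inr (Finset.mem_filter.2 ⟨Finset.mem_univ _, h3, h1, h2⟩)))

lemma sum_split (u v : Fin k) (huv : u < v) (s : Fin k → ℤ) :
    ∑ i, s i = (∑ i ∈ Mid u v, s i) + (∑ i ∈ Out u v, s i) + s u + s v := by
  classical
  have h1 := Finset.sum_filter_add_sum_filter_not Finset.univ
    (fun i : Fin k => (u:ℕ) < (i:ℕ) ∧ (i:ℕ) < (v:ℕ)) s
  set N := Finset.univ.filter (fun i : Fin k => ¬((u:ℕ) < (i:ℕ) ∧ (i:ℕ) < (v:ℕ))) with hN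
  have h2 := Finset.sum_filter_add_sum_filter_not N (fun i : Fin k => i = u ∨ i = v) s
  have huv' : (u:ℕ) < (v:ℕ) := huv
  have hne : u ≠ v := ne_of_lt huv
  have hQ : N.filter (fun i => i = u ∨ i = v) = {u, v} := by
    ext i
    constructor
    · intro hi
      have h := (Finset.mem_filter.1 hi).2
      simpa using h
    · intro hi
      refine Finset.mem_filter.2 ⟨?_, ?_⟩
      · rw [hN, Finset.mem_filter]
        refine ⟨Finset.mem_univ _, ?_⟩
        rcases Finset.mem_insert.1 hi with rfl | hi'
        · omega
        · rw [Finset.mem_singleton] at hi'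
          subst hi'
          omega
      · simpa using hi
  have hO : N.filter (fun i => ¬(i = u ∨ i = v)) = Out u v := by
    ext i
    rw [Finset.mem_filter, hN, Finset.mem_filter, Out, Finset.mem_filter]
    simp only [Finset.mem_univ, true_and, not_or]
    try tauto
  rw [hQ, hO, Finset.sum_pair hne] at h2
  have hM : Mid u v = Finset.univ.filter (fun i : Fin k => (u:ℕ) < (i:ℕ) ∧ (i:ℕ) < (v:ℕ)) := rfl
  rw [hM]
  linarith

lemma sum_pm (T : Finset (Fin k)) (s : Fin k → ℤ) (h : ∀ i ∈ T, s i = 1 ∨ s i = -1) :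
    ∑ i ∈ T, s i = 2 * ((T.filter (fun i => s i = 1)).card : ℤ) - T.card := by
  classical
  rw [← Finset.sum_filter_add_sum_filter_not T (fun i => s i = 1) s]
  have h1 : ∑ i ∈ T.filter (fun i => s i = 1), s i
      = ((T.filter (fun i => s i = 1)).card : ℤ) := by
    rw [Finset.sum_congr rfl (fun i hi => (Finset.mem_filter.1 hi).2)]
    simp
  have h2 : ∑ i ∈ T.filter (fun i => ¬ s i = 1), s i
      = -((T.filter (fun i => ¬ s i = 1)).card : ℤ) := by
    have : ∀ i ∈ T.filter (fun i => ¬ s i = 1), s i = -1 := by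
      intro i hi
      obtain ⟨hiT, hi1⟩ := Finset.mem_filter.1 hi
      rcases h i hiT with h' | h'
      · exact absurd h' hi1
      · exact h'
    rw [Finset.sum_congr rfl this]
    simp
  rw [h1, h2]
  have h3 := Finset.card_filter_add_card_filter_not (s := T) (p := fun i => s i = 1)
  push_cast
  push_cast at h3
  linarith


lemma card_Out (u v : Fin k) (huv : u < v) :
    (Out u v).card = k - ((v:ℕ) - (u:ℕ) - 1) - 2 := by
  classical
  have hne : u ≠ v := ne_of_lt huv
  have huv' : (u:ℕ) < (v:ℕ) := huv
  have h1 := Finset.card_filter_add_card_filter_not (s := (univ : Finset (Fin k)))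
      (p := fun i : Fin k => (u:ℕ) < (i:ℕ) ∧ (i:ℕ) < (v:ℕ))
  set N := Finset.univ.filter (fun i : Fin k => ¬((u:ℕ) < (i:ℕ) ∧ (i:ℕ) < (v:ℕ))) with hN
  have h2 := Finset.card_filter_add_card_filter_not (s := N)
      (p := fun i : Fin k => i = u ∨ i = v)
  have hQ : N.filter (fun i => i = u ∨ i = v) = {u, v} := by
    ext i
    constructor
    · intro hi
      have h := (Finset.mem_filter.1 hi).2
      simpa using h
    · intro hi
      refine Finset.mem_filter.2 ⟨?_, ?_⟩
      · rw [hN, Finset.mem_filter]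
        refine ⟨Finset.mem_univ _, ?_⟩
        rcases Finset.mem_insert.1 hi with rfl | hi'
        · omega
        · rw [Finset.mem_singleton] at hi'
          subst hi'
          omega
      · simpa using hi
  have hO : N.filter (fun i => ¬(i = u ∨ i = v)) = Out u v := by
    ext i
    rw [Finset.mem_filter, hN, Finset.mem_filter, Out, Finset.mem_filter]
    simp only [Finset.mem_univ, true_and, not_or]
    try tauto
  rw [hQ, hO, Finset.card_pair hne] at h2
  have h3 : (Finset.univ.filter
      (fun i : Fin k => (u:ℕ) < (i:ℕ) ∧ (i:ℕ) < (v:ℕ))).card = (v:ℕ) - (u:ℕ) - 1 :=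
    card_Mid u v
  have h4 : (univ : Finset (Fin k)).card = k := by simp
  have h5 : (v:ℕ) < k := v.isLt
  omega

def jfun (u v : Fin k) (A : Finset (Fin k) × Finset (Fin k)) : Fin k → ℤ :=
  fun x => if x ∈ A.1 ∪ A.2 then 1 else if x = u ∨ x = v then 0 else -1

def ifun (u v : Fin k) (s : Fin k → ℤ) : Finset (Fin k) × Finset (Fin k) :=
  ((Mid u v).filter (fun x => s x = 1), (Out u v).filter (fun x => s x = 1))

lemma fiber_mem (u v : Fin k) (huv : u < v) (s : Fin k → ℤ) :
    s ∈ (D k).filter (zex (u, v)) ↔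
      ((∀ i ∈ Mid u v, s i = 1 ∨ s i = -1) ∧ (∀ i ∈ Out u v, s i = 1 ∨ s i = -1) ∧
        s u = 0 ∧ s v = 0 ∧ (∑ i ∈ Mid u v, s i) = 0 ∧ (∑ i ∈ Out u v, s i) = 0) := by
  have hmidsum : ∑ i ∈ Mid u v, s i = midsum s u v := Finset.sum_filter _ _
  constructor
  · intro hs
    obtain ⟨hD, hu0, hv0, hex⟩ := Finset.mem_filter.1 hs
    obtain ⟨hval, hsum, u', v', hu'v', hu'0, hv'0, hex', hmid'⟩ := mem_D.1 hD
    have hnz : ∀ i : Fin k, i ≠ u → i ≠ v → (s i = 1 ∨ s i = -1) := by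
      intro i h1 h2
      rcases hval i with h | h | h
      · exact Or.inr h
      · rcases hex i h with rfl | rfl
        · exact absurd rfl h1
        · exact absurd rfl h2
      · exact Or.inl h
    have hMv : ∀ i ∈ Mid u v, s i = 1 ∨ s i = -1 := by
      intro i hi
      have h := (Finset.mem_filter.1 hi).2
      refine hnz i ?_ ?_
      · intro rfl; omega
      · intro rfl; omega
    have hOv : ∀ i ∈ Out u v, s i = 1 ∨ s i = -1 := by
      intro i hi
      have h := (Finset.mem_filter.1 hi).2
      exact hnz i h.2.1 h.2.2
    have heq : u' = u ∧ v' = v := by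
      have e1 : u' = u ∨ u' = v := hex u' hu'0
      have e2 : v' = u ∨ v' = v := hex v' hv'0
      have e3 : u = u' ∨ u = v' := hex' u hu0
      have e4 : v = u' ∨ v = v' := hex' v hv0
      rcases e1 with e1 | e1 <;> rcases e2 with e2 | e2
      · subst e1; subst e2; exact absurd hu'v' (lt_irrefl _)
      · exact ⟨e1, e2⟩
      · subst e1; subst e2; exact absurd (huv.trans hu'v') (lt_irrefl _)
      · subst e1; subst e2; exact absurd hu'v' (lt_irrefl _)
    obtain ⟨rfl, rfl⟩ := heq
    have hsM : ∑ i ∈ Mid u' v', s i = 0 := by rw [hmidsum]; exact hmid'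
    refine ⟨hMv, hOv, hu0, hv0, hsM, ?_⟩
    have := sum_split u' v' huv s
    rw [hsum] at this  -- careful direction
    linarith [this]
  · rintro ⟨hMv, hOv, hu0, hv0, hsM, hsO⟩
    have hval : ∀ i, s i = -1 ∨ s i = 0 ∨ s i = 1 := by
      intro i
      rcases mem_cases u v i with rfl | rfl | hi | hi
      · exact Or.inr (Or.inl hu0)
      · exact Or.inr (Or.inl hv0)
      · rcases hMv i hi with h | h
        · exact Or.inr (Or.inr h)
        · exact Or.inl h
      · rcases hOv i hi with h | h
        · exact Or.inr (Or.inr h)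
        · exact Or.inl h
    have hex : ∀ w, s w = 0 → w = u ∨ w = v := by
      intro w hw
      rcases mem_cases u v w with rfl | rfl | hi | hi
      · exact Or.inl rfl
      · exact Or.inr rfl
      · rcases hMv w hi with h | h <;> rw [hw] at h <;> exact absurd h (by norm_num)
      · rcases hOv w hi with h | h <;> rw [hw] at h <;> exact absurd h (by norm_num)
    have hsum : ∑ i, s i = 0 := by
      rw [sum_split u v huv s, hsM, hsO, hu0, hv0]
      ring
    refine Finset.mem_filter.2 ⟨mem_D.2 ⟨hval, hsum, u, v, huv, hu0, hv0, hex, ?_⟩,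
      hu0, hv0, hex⟩
    rw [← hmidsum]
    exact hsM

lemma filt_eq (u v : Fin k) (A B : Finset (Fin k)) (hA : A ⊆ Mid u v) (hB : B ⊆ Out u v) :
    (Mid u v).filter (fun x => jfun u v (A, B) x = 1) = A ∧
    (Out u v).filter (fun x => jfun u v (A, B) x = 1) = B := by
  constructor
  · ext x
    constructor
    · intro hx
      obtain ⟨hxM, hx1⟩ := Finset.mem_filter.1 hx
      by_cases hmem : x ∈ A ∪ B
      · rcases Finset.mem_union.1 hmem with h | h
        · exact h
        · exact absurd (hB h) (by intro hc; exact mid_disj_out u v x hxM hc)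
      · exfalso
        rw [jfun] at hx1
        simp only [hmem, if_false] at hx1
        by_cases hc : x = u ∨ x = v <;> simp [hc] at hx1
    · intro hx
      refine Finset.mem_filter.2 ⟨hA hx, ?_⟩
      rw [jfun]
      simp [Finset.mem_union.2 (Or.inl hx)]
  · ext x
    constructor
    · intro hx
      obtain ⟨hxO, hx1⟩ := Finset.mem_filter.1 hx
      by_cases hmem : x ∈ A ∪ B
      · rcases Finset.mem_union.1 hmem with h | h
        · exact absurd hxO (mid_disj_out u v x (hA h))
        · exact h
      · exfalso
        rw [jfun] at hx1
        simp only [hmem, if_false] at hx1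
        by_cases hc : x = u ∨ x = v <;> simp [hc] at hx1
    · intro hx
      refine Finset.mem_filter.2 ⟨hB hx, ?_⟩
      rw [jfun]
      simp [Finset.mem_union.2 (Or.inr hx)]

def gfun (k d : ℕ) : ℕ :=
  if Even d then (Nat.choose d (d/2)) * (Nat.choose (k-2-d) ((k-2-d)/2)) else 0

lemma fiber_card (hk : Even k) (u v : Fin k) (huv : u < v) :
    ((D k).filter (zex (u, v))).card = gfun k ((v:ℕ) - (u:ℕ) - 1) := by
  classical
  have huv' : (u:ℕ) < (v:ℕ) := huv
  have hvk : (v:ℕ) < k := v.isLt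
  set d := (v:ℕ) - (u:ℕ) - 1 with hd
  have hdk : d ≤ k - 2 := by omega
  by_cases hev : Even d
  case neg =>
    rw [gfun, if_neg hev, Finset.card_eq_zero, Finset.eq_empty_iff_forall_notMem]
    intro s hs
    rw [fiber_mem u v huv] at hs
    obtain ⟨hMv, -, -, -, hsM, -⟩ := hs
    have h := sum_pm (Mid u v) s hMv
    rw [hsM, card_Mid] at h
    apply hev
    refine ⟨((Mid u v).filter (fun i => s i = 1)).card, ?_⟩
    have h2 : (d : ℤ) = 2 * ((Mid u v).filter (fun i => s i = 1)).card := by linarith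
    omega
  case pos =>
    have hevo : Even (k - 2 - d) := by
      obtain ⟨a, ha⟩ := hk
      obtain ⟨b, hb⟩ := hev
      exact ⟨a - b - 1, by omega⟩
    rw [gfun, if_pos hev]
    have key : ((D k).filter (zex (u, v))).card
        = (((Mid u v).powersetCard (d/2)) ×ˢ ((Out u v).powersetCard ((k-2-d)/2))).card := by
      apply Finset.card_nbij' (ifun u v) (jfun u v)
      · -- i maps to
        intro s hs
        rw [Finset.mem_coe, fiber_mem u v huv] at hs
        obtain ⟨hMv, hOv, hu0, hv0, hsM, hsO⟩ := hs
        have h1 := sum_pm (Mid u v) s hMv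
        rw [hsM, card_Mid] at h1
        have h2 := sum_pm (Out u v) s hOv
        rw [hsO, card_Out u v huv] at h2
        refine Finset.mem_product.2 ⟨Finset.mem_powersetCard.2 ⟨?_, ?_⟩,
          Finset.mem_powersetCard.2 ⟨?_, ?_⟩⟩
        · show (Mid u v).filter (fun x => s x = 1) ⊆ Mid u v
          exact Finset.filter_subset _ _
        · show ((Mid u v).filter (fun x => s x = 1)).card = d / 2
          have h3 : (d : ℤ) = 2 * ((Mid u v).filter (fun i => s i = 1)).card := by linarith
          omega
        · show (Out u v).filter (fun x => s x = 1) ⊆ Out u v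
          exact Finset.filter_subset _ _
        · show ((Out u v).filter (fun x => s x = 1)).card = (k - 2 - d) / 2
          have h3 : ((k - d - 2 : ℕ) : ℤ)
              = 2 * ((Out u v).filter (fun i => s i = 1)).card := by linarith
          omega
      · -- j maps to
        rintro ⟨A1, A2⟩ hA
        rw [Finset.mem_coe, Finset.mem_product] at hA
        obtain ⟨hA1, hA2⟩ := hA
        obtain ⟨hA1s, hA1c⟩ := Finset.mem_powersetCard.1 hA1
        obtain ⟨hA2s, hA2c⟩ := Finset.mem_powersetCard.1 hA2
        have hunotin : u ∉ A1 ∪ A2 := by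
          rw [Finset.mem_union]
          rintro (h | h)
          · exact u_notMem_Mid u v (hA1s h)
          · exact u_notMem_Out u v (hA2s h)
        have hvnotin : v ∉ A1 ∪ A2 := by
          rw [Finset.mem_union]
          rintro (h | h)
          · exact v_notMem_Mid u v (hA1s h)
          · exact v_notMem_Out u v (hA2s h)
        have hfilt := filt_eq u v A1 A2 hA1s hA2s
        have hMv : ∀ i ∈ Mid u v, jfun u v (A1, A2) i = 1 ∨ jfun u v (A1, A2) i = -1 := by
          intro i hi
          rw [jfun]
          by_cases hmem : i ∈ (A1, A2).1 ∪ (A1, A2).2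
          · simp [hmem]
          · have h1 : i ≠ u := fun h => absurd (h ▸ hi) (u_notMem_Mid u v)
            have h2 : i ≠ v := fun h => absurd (h ▸ hi) (v_notMem_Mid u v)
            simp [hmem, h1, h2]
        have hOv : ∀ i ∈ Out u v, jfun u v (A1, A2) i = 1 ∨ jfun u v (A1, A2) i = -1 := by
          intro i hi
          rw [jfun]
          by_cases hmem : i ∈ (A1, A2).1 ∪ (A1, A2).2
          · simp [hmem]
          · have h := (Finset.mem_filter.1 hi).2
            simp [hmem, h.2.1, h.2.2]
        rw [Finset.mem_coe, fiber_mem u v huv]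
        refine ⟨hMv, hOv, ?_, ?_, ?_, ?_⟩
        · show (if u ∈ A1 ∪ A2 then (1:ℤ) else if u = u ∨ u = v then 0 else -1) = 0
          rw [if_neg hunotin, if_pos (Or.inl rfl)]
        · show (if v ∈ A1 ∪ A2 then (1:ℤ) else if v = u ∨ v = v then 0 else -1) = 0
          rw [if_neg hvnotin, if_pos (Or.inr rfl)]
        · have h := sum_pm (Mid u v) (jfun u v (A1, A2)) hMv
          rw [hfilt.1, hA1c, card_Mid] at h
          rw [h]
          obtain ⟨b, hb⟩ := hev
          have hb2 : d / 2 = b := by omega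
          rw [hb2]
          push_cast
          omega
        · have h := sum_pm (Out u v) (jfun u v (A1, A2)) hOv
          rw [hfilt.2, hA2c, card_Out u v huv] at h
          rw [h]
          obtain ⟨b, hb⟩ := hevo
          have hb2 : (k - 2 - d) / 2 = b := by omega
          have hkd : k - d - 2 = k - 2 - d := by omega
          rw [hb2, hkd]
          push_cast
          omega
      · -- left inverse
        intro s hs
        rw [Finset.mem_coe, fiber_mem u v huv] at hs
        obtain ⟨hMv, hOv, hu0, hv0, hsM, hsO⟩ := hs
        funext x
        have goalshow : jfun u v (ifun u v s) x
            = (if x ∈ (Mid u v).filter (fun y => s y = 1) ∪ (Out u v).filter (fun y => s y = 1)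
               then (1:ℤ) else if x = u ∨ x = v then 0 else -1) := rfl
        rw [goalshow]
        rcases mem_cases u v x with hxu | hxv | hx | hx
        · have hnot : x ∉ (Mid u v).filter (fun y => s y = 1)
              ∪ (Out u v).filter (fun y => s y = 1) := by
            rw [Finset.mem_union]
            rintro (h | h)
            · exact u_notMem_Mid u v (hxu ▸ (Finset.mem_filter.1 h).1)
            · exact u_notMem_Out u v (hxu ▸ (Finset.mem_filter.1 h).1)
          rw [if_neg hnot, if_pos (Or.inl hxu), hxu, hu0]
        · have hnot : x ∉ (Mid u v).filter (fun y => s y = 1)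
              ∪ (Out u v).filter (fun y => s y = 1) := by
            rw [Finset.mem_union]
            rintro (h | h)
            · exact v_notMem_Mid u v (hxv ▸ (Finset.mem_filter.1 h).1)
            · exact v_notMem_Out u v (hxv ▸ (Finset.mem_filter.1 h).1)
          rw [if_neg hnot, if_pos (Or.inr hxv), hxv, hv0]
        · rcases hMv x hx with h1 | h1
          · rw [if_pos (Finset.mem_union.2 (Or.inl (Finset.mem_filter.2 ⟨hx, h1⟩))), h1]
          · have hnm : x ∉ (Mid u v).filter (fun y => s y = 1)
                ∪ (Out u v).filter (fun y => s y = 1) := by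
              rw [Finset.mem_union]
              rintro (h | h)
              · have h2 := (Finset.mem_filter.1 h).2
                rw [h1] at h2
                norm_num at h2
              · exact mid_disj_out u v x hx (Finset.mem_filter.1 h).1
            have h2 : ¬(x = u ∨ x = v) := by
              rintro (h | h)
              · exact absurd (h ▸ hx) (u_notMem_Mid u v)
              · exact absurd (h ▸ hx) (v_notMem_Mid u v)
            rw [if_neg hnm, if_neg h2, h1]
        · rcases hOv x hx with h1 | h1
          · rw [if_pos (Finset.mem_union.2 (Or.inr (Finset.mem_filter.2 ⟨hx, h1⟩))), h1]
          · have hnm : x ∉ (Mid u v).filter (fun y => s y = 1)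
                ∪ (Out u v).filter (fun y => s y = 1) := by
              rw [Finset.mem_union]
              rintro (h | h)
              · exact mid_disj_out u v x (Finset.mem_filter.1 h).1 hx
              · have h2 := (Finset.mem_filter.1 h).2
                rw [h1] at h2
                norm_num at h2
            have hout := (Finset.mem_filter.1 hx).2
            have h2 : ¬(x = u ∨ x = v) := by
              rintro (h | h)
              · exact hout.2.1 h
              · exact hout.2.2 h
            rw [if_neg hnm, if_neg h2, h1]
      · -- right inverse
        rintro ⟨A1, A2⟩ hA
        rw [Finset.mem_coe, Finset.mem_product] at hA
        obtain ⟨hA1, hA2⟩ := hA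
        obtain ⟨hA1s, -⟩ := Finset.mem_powersetCard.1 hA1
        obtain ⟨hA2s, -⟩ := Finset.mem_powersetCard.1 hA2
        have hfilt := filt_eq u v A1 A2 hA1s hA2s
        show ((Mid u v).filter (fun x => jfun u v (A1, A2) x = 1),
          (Out u v).filter (fun x => jfun u v (A1, A2) x = 1)) = (A1, A2)
        rw [Prod.mk.injEq]
        exact ⟨hfilt.1, hfilt.2⟩
    rw [key, Finset.card_product, Finset.card_powersetCard, Finset.card_powersetCard,
      card_Mid, card_Out u v huv]
    have hkd : k - d - 2 = k - 2 - d := by omega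
    rw [hkd]


lemma Ipairs_cardfilter (d : ℕ) (hd : d < k - 1) :
    ((Ipairs k).filter (fun p => (p.2:ℕ) - (p.1:ℕ) - 1 = d)).card = k - 1 - d := by
  have hcard : (Finset.range (k-1-d)).card = k - 1 - d := Finset.card_range _
  rw [← hcard]
  refine Finset.card_bij' (fun p _ => ((p.1 : Fin k) : ℕ))
    (fun a ha => ((⟨a, by have := Finset.mem_range.1 ha; omega⟩ : Fin k),
      (⟨a + d + 1, by have := Finset.mem_range.1 ha; omega⟩ : Fin k))) ?_ ?_ ?_ ?_
  · intro p hp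
    obtain ⟨hpI, hpd⟩ := Finset.mem_filter.1 hp
    rw [Ipairs, Finset.mem_filter] at hpI
    have h1 : (p.1:ℕ) < (p.2:ℕ) := hpI.2
    have h2 : (p.2:ℕ) < k := p.2.isLt
    show ((p.1 : Fin k) : ℕ) ∈ Finset.range (k-1-d)
    rw [Finset.mem_range]
    omega
  · intro a ha
    have h := Finset.mem_range.1 ha
    refine Finset.mem_filter.2 ⟨Finset.mem_filter.2 ⟨Finset.mem_univ _, ?_⟩, ?_⟩
    · show (a : ℕ) < (a + d + 1 : ℕ)
      omega
    · show (a + d + 1) - a - 1 = d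
      omega
  · intro p hp
    obtain ⟨hpI, hpd⟩ := Finset.mem_filter.1 hp
    rw [Ipairs, Finset.mem_filter] at hpI
    have h1 : (p.1:ℕ) < (p.2:ℕ) := hpI.2
    obtain ⟨p1, p2⟩ := p
    simp only at hpd h1 ⊢
    rw [Prod.mk.injEq]
    constructor
    · exact Fin.ext rfl
    · apply Fin.ext
      show (p1:ℕ) + d + 1 = (p2:ℕ)
      omega
  · intro a ha
    rfl

lemma D_card_eq (hk : Even k) :
    (D k).card = ∑ d ∈ Finset.range (k-1), (k - 1 - d) * gfun k d := by
  rw [D_card_sum]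
  have hmap : ∀ p ∈ Ipairs k, ((p.2:ℕ) - (p.1:ℕ) - 1) ∈ Finset.range (k-1) := by
    intro p hp
    rw [Ipairs, Finset.mem_filter] at hp
    have h1 : (p.1:ℕ) < (p.2:ℕ) := hp.2
    have h2 : (p.2:ℕ) < k := p.2.isLt
    rw [Finset.mem_range]
    omega
  rw [← Finset.sum_fiberwise_of_maps_to hmap (fun p => ((D k).filter (zex p)).card)]
  refine Finset.sum_congr rfl fun d hd => ?_
  rw [Finset.mem_range] at hd
  have hconst : ∀ p ∈ (Ipairs k).filter (fun p => (p.2:ℕ) - (p.1:ℕ) - 1 = d),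
      ((D k).filter (zex p)).card = gfun k d := by
    intro p hp
    obtain ⟨hpI, hpd⟩ := Finset.mem_filter.1 hp
    rw [Ipairs, Finset.mem_filter] at hpI
    rw [← hpd]
    exact fiber_card hk p.1 p.2 hpI.2
  rw [Finset.sum_congr rfl hconst, Finset.sum_const, Ipairs_cardfilter d hd, smul_eq_mul]

lemma D_card_val (m : ℕ) (hkm : k = 2*m+2) : (D k).card = (m+1) * 4^m := by
  have hk : Even k := ⟨m+1, by omega⟩
  rw [D_card_eq hk]
  subst hkm
  have hr : 2*m+2-1 = 2*m+1 := by omega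
  rw [hr]
  rw [← Finset.sum_filter_add_sum_filter_not (Finset.range (2*m+1)) Even
    (fun d => (2*m+1-d) * gfun (2*m+2) d)]
  have hodd : ∑ d ∈ (Finset.range (2*m+1)).filter (fun d => ¬ Even d),
      (2*m+1-d) * gfun (2*m+2) d = 0 := by
    apply Finset.sum_eq_zero
    intro d hd
    rw [gfun, if_neg (Finset.mem_filter.1 hd).2, mul_zero]
  rw [hodd, add_zero]
  have himg : (Finset.range (2*m+1)).filter Even
      = (Finset.range (m+1)).image (fun e => 2*e) := by
    ext d
    rw [Finset.mem_filter, Finset.mem_range, Finset.mem_image]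
    constructor
    · rintro ⟨hd, e, he⟩
      exact ⟨e, Finset.mem_range.2 (by omega), by omega⟩
    · rintro ⟨e, he, rfl⟩
      rw [Finset.mem_range] at he
      exact ⟨by omega, ⟨e, by omega⟩⟩
  rw [himg, Finset.sum_image (by intro a _ b _ h; simp only at h; omega)]
  rw [← weighted_sum m]
  refine Finset.sum_congr rfl fun e he => ?_
  rw [Finset.mem_range] at he
  congr 1
  rw [gfun, if_pos ⟨e, by omega⟩]
  have h2 : (2*e)/2 = e := by omega
  have h3 : 2*m+2-2-2*e = 2*(m-e) := by omega
  have h4 : (2*(m-e))/2 = m - e := by omega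
  rw [h2, h3, h4]
  rfl

lemma real_final (m k : ℕ) (hkm : k = 2*m+2) :
    (((m+1) * 4^m : ℕ) : ℝ) = k * (2:ℝ) ^ ((k:ℤ) - 3) := by
  subst hkm
  have h3 : ((2*m+2 : ℕ) : ℤ) - 3 = 2*(m:ℤ) - 1 := by push_cast; ring
  rw [h3]
  have h4 : (2:ℝ) ^ (2*(m:ℤ) - 1) = 4^m / 2 := by
    rw [zpow_sub₀ (by norm_num : (2:ℝ) ≠ 0)]
    congr 1
    · rw [show 2*(m:ℤ) = ((2*m : ℕ) : ℤ) by push_cast; ring, zpow_natCast, pow_mul]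
      norm_num
    · norm_num
  rw [h4]
  push_cast
  field_simp

end Stmt5X

theorem stmt5 (k : ℕ) (hk : Even k) (h2 : 2 ≤ k) :
    ({γ : Fin (k + 1) → ℤ | IsGammaTwoFlat k γ}.ncard : ℝ)
      = k * (2 : ℝ) ^ ((k : ℤ) - 3) := by
  obtain ⟨t, ht⟩ := hk
  have hkm : k = 2*(t-1)+2 := by omega
  rw [Stmt5X.ncard_eq, Stmt5X.D_card_val (t-1) hkm]
  exact Stmt5X.real_final (t-1) k hkm
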